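/- Let K ⊆ L be fields with L infinite, and let M ∈ Mat_m(K[x₁,…,xₙ]). Then M is strongly nilpotent over L (i.e., there exists r ≥ 1 such that M(v⁽¹⁾)·M(v⁽²⁾)⋯M(v⁽ʳ⁾) = 0 for all v⁽¹⁾,…,v⁽ʳ⁾ ∈ Lⁿ) if and only if M is similar over K to a triangular matrix in Mat_m(K[x]) whose principal diagonal is entirely zero. -/

import Mathlib

open MvPolynomial Matrix

section aux
variable {K L : Type*} [Field K] [Field L] [Algebra K L] [Infinite L]

theorem zero_of_aeval_zero {σ : Type*} (p : MvPolynomial σ K)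
    (h : ∀ v : σ → L, aeval v p = 0) : p = 0 := by
  have h1 : MvPolynomial.map (algebraMap K L) p = 0 := by
    apply MvPolynomial.funext (q := 0)
    intro x
    rw [map_zero, eval_map, ← aeval_def, h]
  exact MvPolynomial.map_injective _ (algebraMap K L).injective (by rw [h1, map_zero])

-- mapping matrices entrywise by a ring hom commutes with mulVec
theorem mulVec_map {α β : Type*} [CommRing α] [CommRing β] (f : α →+* β) {m : ℕ}
    (A : Matrix (Fin m) (Fin m) α) (x : Fin m → α) :
    (A.map f).mulVec (fun i => f (x i)) = fun i => f (A.mulVec x i) := by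
  funext i
  simp [Matrix.mulVec, dotProduct, map_sum, _root_.map_mul]

theorem matprod_map {K : Type*} [Field K] {m n : ℕ}
    (M : Matrix (Fin m) (Fin m) (MvPolynomial (Fin n) K))
    {A B : Type*} [CommRing A] [CommRing B] [Algebra K A] [Algebra K B]
    (f : A →ₐ[K] B) {s : ℕ} (v : Fin s → Fin n → A) :
    ((List.ofFn fun i => M.map (aeval (v i))).prod).map (f : A →+* B) =
      (List.ofFn fun i => M.map (aeval fun j => f (v i j))).prod := by
  have := map_list_prod ((f : A →+* B).mapMatrix) (List.ofFn fun i => M.map (aeval (v i)))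
  simp only [RingHom.mapMatrix_apply] at this
  rw [this, List.map_ofFn]
  refine congrArg List.prod (congrArg List.ofFn (funext fun i => ?_))
  show ((M.map (aeval (v i))).map (f : A →+* B)) = _
  rw [Matrix.map_map]
  congr 1
  have : (f : A →+* B) ∘ (aeval (v i) : MvPolynomial (Fin n) K →ₐ[K] A) = 
      (aeval fun j => f (v i j) : MvPolynomial (Fin n) K →ₐ[K] B) := by
    have h2 := MvPolynomial.comp_aeval (v i) f
    calc (⇑f ∘ ⇑(aeval (v i))) = ⇑(f.comp (aeval (v i))) := rfl
    _ = _ := by rw [h2]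
  rw [this]

end aux

universe u

variable {K : Type u} [Field K]

/-- the flag submodule -/
def NN {m n : ℕ} (M : Matrix (Fin m) (Fin m) (MvPolynomial (Fin n) K)) (k : ℕ) :
    Submodule K (Fin m → K) where
  carrier := {u | ∀ (A : Type u) [CommRing A] [Algebra K A] (v : Fin k → Fin n → A),
    (List.ofFn fun i => M.map (aeval (v i))).prod.mulVec (fun t => algebraMap K A (u t)) = 0}
  zero_mem' := by
    intro A _ _ v
    have : (fun t : Fin m => algebraMap K A ((0 : Fin m → K) t)) = 0 := by funext t; simp
    rw [this, Matrix.mulVec_zero]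
  add_mem' := by
    intro a b ha hb A _ _ v
    have : (fun t : Fin m => algebraMap K A ((a + b) t)) =
        (fun t => algebraMap K A (a t)) + (fun t => algebraMap K A (b t)) := by
      funext t; simp
    rw [this, Matrix.mulVec_add, ha A v, hb A v, add_zero]
  smul_mem' := by
    intro c x hx A _ _ v
    have : (fun t : Fin m => algebraMap K A ((c • x) t)) =
        (algebraMap K A c) • (fun t => algebraMap K A (x t)) := by
      funext t; simp [Algebra.smul_def]
    rw [this, Matrix.mulVec_smul, hx A v, smul_zero]

theorem NN_zero {m n : ℕ} (M : Matrix (Fin m) (Fin m) (MvPolynomial (Fin n) K)) :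
    NN M 0 = ⊥ := by
  ext u
  simp only [Submodule.mem_bot]
  constructor
  · intro hu
    have := hu K (fun i => i.elim0)
    simp only [List.ofFn_zero, List.prod_nil, Matrix.one_mulVec] at this
    funext t
    have := congrFun this t
    simpa using this
  · rintro rfl
    exact (NN M 0).zero_mem

theorem NN_mono {m n : ℕ} (M : Matrix (Fin m) (Fin m) (MvPolynomial (Fin n) K)) (k : ℕ) :
    NN M k ≤ NN M (k + 1) := by
  intro u hu A _ _ v
  rw [List.ofFn_succ, List.prod_cons, ← Matrix.mulVec_mulVec,
    hu A (fun i => v i.succ), Matrix.mulVec_zero]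

theorem NN_top {L : Type*} [Field L] [Algebra K L] [Infinite L] {m n r : ℕ}
    (M : Matrix (Fin m) (Fin m) (MvPolynomial (Fin n) K))
    (H : ∀ v : Fin r → Fin n → L, (List.ofFn fun i => M.map (aeval (v i))).prod = 0) :
    NN M r = ⊤ := by
  have hP : (List.ofFn fun i =>
      M.map (aeval fun j => (X (i, j) : MvPolynomial (Fin r × Fin n) K))).prod = 0 := by
    refine Matrix.ext fun s t => ?_
    rw [Matrix.zero_apply]
    apply zero_of_aeval_zero (L := L)
    intro w
    have h1 := matprod_map M (aeval w) (fun (i : Fin r) (j : Fin n) =>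
      (X (i, j) : MvPolynomial (Fin r × Fin n) K))
    simp only [aeval_X] at h1
    rw [H (fun i j => w (i, j))] at h1
    have := congrFun (congrFun h1 s) t
    simpa using this
  ext u
  simp only [Submodule.mem_top, iff_true]
  intro A _ _ v
  have h1 := matprod_map M (aeval (fun p : Fin r × Fin n => v p.1 p.2))
    (fun (i : Fin r) (j : Fin n) => (X (i, j) : MvPolynomial (Fin r × Fin n) K))
  rw [hP] at h1
  simp only [aeval_X] at h1
  rw [show (List.ofFn fun i => M.map (aeval (v i))).prod =
      (List.ofFn fun i => M.map (aeval fun j => v i j)).prod by rfl, ← h1]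
  simp [Matrix.zero_mulVec]

theorem NN_coeff {m n : ℕ} (M : Matrix (Fin m) (Fin m) (MvPolynomial (Fin n) K))
    {k : ℕ} {u : Fin m → K} (hu : u ∈ NN M (k + 1)) (d : Fin n →₀ ℕ) :
    (fun s => MvPolynomial.coeff d
      (M.mulVec (fun t => algebraMap K (MvPolynomial (Fin n) K) (u t)) s)) ∈ NN M k := by
  intro A _ _ v
  have h0 := hu (MvPolynomial (Fin n) A) (Fin.snoc (fun i j => (C (v i j) : (MvPolynomial (Fin n) A))) X)
  rw [List.ofFn_succ', List.concat_eq_append, List.prod_append, List.prod_singleton] at h0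
  simp only [Fin.snoc_castSucc, Fin.snoc_last] at h0
  -- rewrite first factor as image of Q under C
  have hQ : (List.ofFn fun i => M.map (aeval fun j => (C (v i j) : (MvPolynomial (Fin n) A)))).prod =
      ((List.ofFn fun i => M.map (aeval (v i))).prod).map (C : A →+* (MvPolynomial (Fin n) A)) := by
    have h1 := matprod_map M (IsScalarTower.toAlgHom K A (MvPolynomial (Fin n) A)) v
    have hC : (IsScalarTower.toAlgHom K A (MvPolynomial (Fin n) A) : A →+* (MvPolynomial (Fin n) A)) = (C : A →+* (MvPolynomial (Fin n) A)) := by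
      refine RingHom.ext fun a => ?_
      have : (IsScalarTower.toAlgHom K A (MvPolynomial (Fin n) A) : A →+* (MvPolynomial (Fin n) A)) a = algebraMap A (MvPolynomial (Fin n) A) a := rfl
      rw [this, MvPolynomial.algebraMap_eq]
    rw [hC] at h1
    simp only [IsScalarTower.coe_toAlgHom', MvPolynomial.algebraMap_eq] at h1
    exact h1.symm
  rw [hQ] at h0
  -- rewrite last factor action as coefficient-map image
  have hM : M.map (aeval (X : Fin n → (MvPolynomial (Fin n) A))) =
      M.map (MvPolynomial.map (algebraMap K A) : MvPolynomial (Fin n) K →+* (MvPolynomial (Fin n) A)) := by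
    congr 1
    funext p
    induction p using MvPolynomial.induction_on with
    | C a => rw [aeval_C, map_C, MvPolynomial.algebraMap_apply]
    | add p q hp hq => rw [map_add, map_add, hp, hq]
    | mul_X p i hp => rw [map_mul, map_mul, hp, aeval_X, map_X]
  have halg : (fun t => algebraMap K (MvPolynomial (Fin n) A) (u t)) = fun t =>
      (MvPolynomial.map (algebraMap K A) : MvPolynomial (Fin n) K →+* (MvPolynomial (Fin n) A))
        (algebraMap K (MvPolynomial (Fin n) K) (u t)) := by
    funext t
    rw [IsScalarTower.algebraMap_apply K A (MvPolynomial (Fin n) A)]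
    simp only [MvPolynomial.algebraMap_eq]
    rw [MvPolynomial.map_C]
  rw [← Matrix.mulVec_mulVec, hM, halg,
    mulVec_map (MvPolynomial.map (algebraMap K A) : MvPolynomial (Fin n) K →+* (MvPolynomial (Fin n) A))] at h0
  -- extract coefficient d
  funext t
  have h2 := congrArg (MvPolynomial.coeff d) (congrFun h0 t)
  simp only [Matrix.mulVec, dotProduct, Matrix.map_apply] at h2
  rw [MvPolynomial.coeff_sum] at h2
  simp only [MvPolynomial.coeff_C_mul, MvPolynomial.coeff_map, MvPolynomial.coeff_zero,
    Pi.zero_apply] at h2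
  simp only [Matrix.mulVec, dotProduct, Pi.zero_apply]
  exact h2

section triangular
variable {α : Type*} [CommRing α] {m : ℕ}

theorem prod_lower_tri (ls : List (Matrix (Fin m) (Fin m) α))
    (h : ∀ A ∈ ls, ∀ i j : Fin m, i ≤ j → A i j = 0) :
    ∀ i j : Fin m, (i : ℕ) < (j : ℕ) + ls.length → ls.prod i j = 0 := by
  induction ls with
  | nil =>
    intro i j hij
    simp only [List.prod_nil, List.length_nil, Nat.add_zero] at *
    exact Matrix.one_apply_ne (by intro hh; rw [hh] at hij; omega)
  | cons A ls ih =>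
    intro i j hij
    rw [List.prod_cons, Matrix.mul_apply]
    apply Finset.sum_eq_zero
    intro x _
    by_cases hx : i ≤ x
    · rw [h A (List.mem_cons_self) i x hx, zero_mul]
    · push_neg at hx
      rw [ih (fun B hB => h B (List.mem_cons_of_mem _ hB)) x j (by
        simp only [List.length_cons] at hij
        omega), mul_zero]

theorem prod_upper_tri (ls : List (Matrix (Fin m) (Fin m) α))
    (h : ∀ A ∈ ls, ∀ i j : Fin m, j ≤ i → A i j = 0) :
    ∀ i j : Fin m, (j : ℕ) < (i : ℕ) + ls.length → ls.prod i j = 0 := by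
  induction ls with
  | nil =>
    intro i j hij
    simp only [List.prod_nil, List.length_nil, Nat.add_zero] at *
    exact Matrix.one_apply_ne (by intro hh; rw [hh] at hij; omega)
  | cons A ls ih =>
    intro i j hij
    rw [List.prod_cons, Matrix.mul_apply]
    apply Finset.sum_eq_zero
    intro x _
    by_cases hx : x ≤ i
    · rw [h A (List.mem_cons_self) i x hx, zero_mul]
    · push_neg at hx
      rw [ih (fun B hB => h B (List.mem_cons_of_mem _ hB)) x j (by
        simp only [List.length_cons] at hij
        omega), mul_zero]

theorem prod_conj (s : ℕ) (Cm D : Matrix (Fin m) (Fin m) α)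
    (hCD : Cm * D = 1) (hDC : D * Cm = 1) (f : Fin s → Matrix (Fin m) (Fin m) α) :
    (List.ofFn fun i => Cm * f i * D).prod = Cm * (List.ofFn f).prod * D := by
  have key : ∀ X Y : Matrix (Fin m) (Fin m) α,
      (Cm * X * D) * (Cm * Y * D) = Cm * (X * Y) * D := by
    intro X Y
    calc (Cm * X * D) * (Cm * Y * D) = Cm * X * (D * Cm) * (Y * D) := by
          simp only [Matrix.mul_assoc]
      _ = Cm * X * (Y * D) := by rw [hDC, Matrix.mul_one]
      _ = Cm * (X * Y) * D := by simp only [Matrix.mul_assoc]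
  induction s with
  | zero => simp [hCD]
  | succ s ih =>
    rw [List.ofFn_succ, List.ofFn_succ, List.prod_cons, List.prod_cons, ih (fun i => f i.succ),
      key]

end triangular

theorem adapted_list {K : Type u} [Field K] {m : ℕ} (N : ℕ → Submodule K (Fin m → K))
    (mono : ∀ k, N k ≤ N (k + 1)) (hN0 : N 0 = ⊥) : ∀ k : ℕ, ∃ l : List (Fin m → K),
      LinearIndependent K (fun i : Fin l.length => l.get i) ∧
      Submodule.span K {x | x ∈ l} = N k ∧
      ∀ q ≤ k, ∃ s ≤ l.length, Submodule.span K {x | x ∈ l.take s} = N q := by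
  intro k
  induction k with
  | zero =>
    refine ⟨[], by have : IsEmpty (Fin ([] : List (Fin m → K)).length) := ⟨fun i => absurd i.isLt (by simp)⟩; exact linearIndependent_empty_type, by simp [hN0], ?_⟩
    intro q hq
    interval_cases q
    exact ⟨0, le_refl _, by simp [hN0]⟩
  | succ k ih =>
    obtain ⟨l, hli, hspan, hpref⟩ := ih
    classical
    have hrange : Set.range (fun i : Fin l.length => l.get i) = {x | x ∈ l} := by
      ext x
      simp [List.mem_iff_get]
    have hsetli : LinearIndependent K ((↑) : {x | x ∈ l} → (Fin m → K)) := by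
      rw [← hrange]
      exact hli.linearIndepOn_id
    have hsub : {x | x ∈ l} ⊆ (N (k + 1) : Set (Fin m → K)) := by
      intro x hx
      exact (mono k) (hspan ▸ Submodule.subset_span hx)
    obtain ⟨b, hbt, hsb, htb, hlib'⟩ := exists_linearIndepOn_id_extension hsetli hsub
    have hlib : LinearIndependent K ((↑) : b → (Fin m → K)) := hlib'
    have hbfin : b.Finite := LinearIndependent.setFinite hlib
    set newl : List (Fin m → K) := (hbfin.toFinset \ l.toFinset).toList with hnewl
    have hmem : ∀ x ∈ l ++ newl, x ∈ b := by
      intro x hx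
      rcases List.mem_append.mp hx with h | h
      · exact hsb h
      · have := (Finset.mem_toList).mp h
        simp only [Finset.mem_sdiff, Set.Finite.mem_toFinset] at this
        exact this.1
    have hset : {x | x ∈ l ++ newl} = b := by
      ext x
      constructor
      · intro hx
        exact hmem x hx
      · intro hx
        by_cases hxl : x ∈ l
        · exact List.mem_append.mpr (Or.inl hxl)
        · refine List.mem_append.mpr (Or.inr ?_)
          rw [hnewl, Finset.mem_toList, Finset.mem_sdiff, Set.Finite.mem_toFinset]
          exact ⟨hx, fun hc => hxl (List.mem_toFinset.mp hc)⟩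
    have hspan' : Submodule.span K {x | x ∈ l ++ newl} = N (k + 1) := by
      rw [hset]
      refine le_antisymm ?_ htb
      rw [Submodule.span_le]
      exact hbt
    refine ⟨l ++ newl, ?_, hspan', ?_⟩
    · -- linear independence of the concatenated family
      have hnodup : (l ++ newl).Nodup := by
        refine List.Nodup.append ?_ (Finset.nodup_toList _) ?_
        · exact List.nodup_iff_injective_get.mpr (LinearIndependent.injective hli)
        · intro x hxl hxnew
          have := (Finset.mem_toList).mp hxnew
          simp only [Finset.mem_sdiff, List.mem_toFinset, Set.Finite.mem_toFinset] at this
          exact this.2 hxl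
      have hinj : Function.Injective
          (fun i : Fin (l ++ newl).length =>
            (⟨(l ++ newl).get i, hmem _ (List.get_mem _ _)⟩ : b)) := by
        intro i i' hii
        have : (l ++ newl).get i = (l ++ newl).get i' := congrArg Subtype.val hii
        exact List.nodup_iff_injective_get.mp hnodup this
      have heq : (fun i : Fin (l ++ newl).length => (l ++ newl).get i) =
          ((↑) : b → (Fin m → K)) ∘
            (fun i : Fin (l ++ newl).length =>
              (⟨(l ++ newl).get i, hmem _ (List.get_mem _ _)⟩ : b)) := rfl
      rw [heq]
      exact hlib.comp _ hinj
    · -- prefixes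
      intro q hq
      rcases Nat.lt_succ_iff_lt_or_eq.mp (Nat.lt_succ_of_le hq) with h | h
      · obtain ⟨s, hsl, hsp⟩ := hpref q (Nat.lt_succ_iff.mp h)
        refine ⟨s, ?_, ?_⟩
        · rw [List.length_append]
          omega
        · rw [List.take_append_of_le_length hsl]
          exact hsp
      · subst h
        exact ⟨(l ++ newl).length, le_refl _, by rw [List.take_length]; exact hspan'⟩

theorem adapted_basis {K : Type u} [Field K] {m r : ℕ} (N : ℕ → Submodule K (Fin m → K))
    (mono : ∀ k, N k ≤ N (k + 1)) (hN0 : N 0 = ⊥) (htop : N r = ⊤) :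
    ∃ b : Module.Basis (Fin m) K (Fin m → K), ∀ j : Fin m, ∃ k : ℕ,
      b j ∈ N (k + 1) ∧ N k ≤ Submodule.span K (⇑b '' {i : Fin m | (i : ℕ) < (j : ℕ)}) := by
  obtain ⟨l, hli, hspan, hpref⟩ := adapted_list N mono hN0 r
  have hrange : Set.range (fun i : Fin l.length => l.get i) = {x | x ∈ l} := by
    ext x
    simp [List.mem_iff_get]
  have hsp : ⊤ ≤ Submodule.span K (Set.range (fun i : Fin l.length => l.get i)) := by
    rw [hrange, hspan, htop]
  let B0 : Module.Basis (Fin l.length) K (Fin m → K) := Module.Basis.mk hli hsp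
  have hlen : l.length = m := by
    have h1 : Module.finrank K (Fin m → K) = l.length := by
      rw [Module.finrank_eq_card_basis B0, Fintype.card_fin]
    rw [Module.finrank_fintype_fun_eq_card, Fintype.card_fin] at h1
    omega
  refine ⟨B0.reindex (finCongr hlen), ?_⟩
  intro j
  set b := B0.reindex (finCongr hlen) with hb
  have hbj : ∀ j' : Fin m, b j' = l.get (Fin.cast hlen.symm j') := by
    intro j'
    rw [hb, Module.Basis.reindex_apply]
    have : (finCongr hlen).symm j' = Fin.cast hlen.symm j' := rfl
    rw [this]
    simp [B0]
  have hex : ∃ q, b j ∈ N q := ⟨r, by rw [htop]; trivial⟩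
  classical
  set q := Nat.find hex with hq
  have hqmem : b j ∈ N q := Nat.find_spec hex
  have hq1 : 1 ≤ q := by
    by_contra hc
    push_neg at hc
    interval_cases q
    · rw [hN0] at hqmem
      exact b.ne_zero j (by simpa using hqmem)
  refine ⟨q - 1, by rwa [Nat.sub_add_cancel hq1], ?_⟩
  have hnot : b j ∉ N (q - 1) := Nat.find_min hex (by omega)
  have hqr : q ≤ r := Nat.find_le (by rw [htop]; trivial)
  obtain ⟨s, hsl, hsp2⟩ := hpref (q - 1) (by omega)
  have hsj : s ≤ (j : ℕ) := by
    by_contra hc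
    push_neg at hc
    apply hnot
    rw [← hsp2]
    apply Submodule.subset_span
    show b j ∈ l.take s
    rw [hbj j]
    have h1 : l.get (Fin.cast hlen.symm j) = (l.take s)[(j : ℕ)]'(by
        simp only [List.length_take]
        omega) := by
      rw [List.getElem_take]
      rfl
    rw [h1]
    exact List.getElem_mem _
  rw [← hsp2, Submodule.span_le]
  intro x hx
  apply Submodule.subset_span
  obtain ⟨idx, hidx⟩ := List.mem_iff_getElem.mp hx
  obtain ⟨hlt, hval⟩ := hidx
  have hidxlt : idx < l.length := by
    have := hlt
    simp only [List.length_take] at this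
    omega
  have hxval : x = l[idx] := by
    rw [← hval, List.getElem_take]
  refine ⟨⟨idx, by omega⟩, ?_, ?_⟩
  · show idx < (j : ℕ)
    have := hlt
    simp only [List.length_take] at this
    omega
  · rw [hbj ⟨idx, by omega⟩, hxval]
    rfl

theorem tri_to_nilpotent {K L : Type*} [Field K] [Field L] [Algebra K L] {m n : ℕ}
    (M : Matrix (Fin m) (Fin m) (MvPolynomial (Fin n) K)) (T : GL (Fin m) K)
    (Nc : Matrix (Fin m) (Fin m) (MvPolynomial (Fin n) K))
    (hNc : Nc = ((T⁻¹ : GL (Fin m) K) : Matrix (Fin m) (Fin m) K).map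
        (algebraMap K (MvPolynomial (Fin n) K)) * M *
      ((T : Matrix (Fin m) (Fin m) K).map (algebraMap K (MvPolynomial (Fin n) K))))
    (hcase : (∀ i j : Fin m, i ≤ j → Nc i j = 0) ∨ (∀ i j : Fin m, j ≤ i → Nc i j = 0)) :
    ∀ v : Fin (m + 1) → Fin n → L, (List.ofFn fun i => M.map (aeval (v i))).prod = 0 := by
  intro v
  set φ := algebraMap K (MvPolynomial (Fin n) K) with hφ
  set Tm := (T : Matrix (Fin m) (Fin m) K) with hTm
  set Tim := ((T⁻¹ : GL (Fin m) K) : Matrix (Fin m) (Fin m) K) with hTim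
  have h1 : Tm * Tim = 1 := by
    rw [hTm, hTim, ← Units.val_mul, mul_inv_cancel, Units.val_one]
  have h2 : Tim * Tm = 1 := by
    rw [hTm, hTim, ← Units.val_mul, inv_mul_cancel, Units.val_one]
  have hmapmul : ∀ (X Y : Matrix (Fin m) (Fin m) K), (X * Y).map φ = X.map φ * Y.map φ := by
    intro X Y
    exact Matrix.map_mul
  have hCD : Tm.map φ * Tim.map φ = 1 := by
    rw [← hmapmul, h1, Matrix.map_one φ (map_zero φ) (map_one φ)]
  have hDC : Tim.map φ * Tm.map φ = 1 := by
    rw [← hmapmul, h2, Matrix.map_one φ (map_zero φ) (map_one φ)]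
  have hM : M = Tm.map φ * Nc * Tim.map φ := by
    rw [hNc]
    calc M = (Tm.map φ * Tim.map φ) * M * (Tm.map φ * Tim.map φ) := by
          rw [hCD, Matrix.one_mul, Matrix.mul_one]
      _ = Tm.map φ * (Tim.map φ * M * Tm.map φ) * Tim.map φ := by
          simp only [Matrix.mul_assoc]
  -- evaluate
  have hfac : ∀ i : Fin (m + 1), M.map (aeval (v i)) =
      Tm.map (algebraMap K L) * (Nc.map (aeval (v i))) * Tim.map (algebraMap K L) := by
    intro i
    have hcomp : ∀ (X : Matrix (Fin m) (Fin m) K),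
        (X.map φ).map (aeval (v i)) = X.map (algebraMap K L) := by
      intro X
      rw [Matrix.map_map]
      have hfg : (⇑(aeval (v i)) ∘ ⇑φ) = ⇑(algebraMap K L) := by
        funext c
        show aeval (v i) (φ c) = algebraMap K L c
        rw [hφ]
        exact (MvPolynomial.aeval (R := K) (v i)).commutes c
      rw [hfg]
    rw [show M.map (aeval (v i)) = (Tm.map φ * Nc * Tim.map φ).map (aeval (v i)) by rw [← hM]]
    have : ∀ (X Y : Matrix (Fin m) (Fin m) (MvPolynomial (Fin n) K)),
        (X * Y).map (aeval (v i)) = X.map (aeval (v i)) * Y.map (aeval (v i)) := fun X Y =>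
      Matrix.map_mul
    rw [this, this, hcomp, hcomp]
  have hCDL : Tm.map (algebraMap K L) * Tim.map (algebraMap K L) = 1 := by
    rw [show Tm.map (algebraMap K L) * Tim.map (algebraMap K L) =
      (Tm * Tim).map (algebraMap K L) from Matrix.map_mul.symm, h1,
      Matrix.map_one _ (map_zero _) (map_one _)]
  have hDCL : Tim.map (algebraMap K L) * Tm.map (algebraMap K L) = 1 := by
    rw [show Tim.map (algebraMap K L) * Tm.map (algebraMap K L) =
      (Tim * Tm).map (algebraMap K L) from Matrix.map_mul.symm, h2,
      Matrix.map_one _ (map_zero _) (map_one _)]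
  calc (List.ofFn fun i => M.map (aeval (v i))).prod
      = (List.ofFn fun i => Tm.map (algebraMap K L) * (Nc.map (aeval (v i))) *
          Tim.map (algebraMap K L)).prod := by
        congr 1
        exact congrArg List.ofFn (funext hfac)
    _ = Tm.map (algebraMap K L) * (List.ofFn fun i => Nc.map (aeval (v i))).prod *
          Tim.map (algebraMap K L) := prod_conj _ _ _ hCDL hDCL _
    _ = 0 := by
        have hzero : (List.ofFn fun i : Fin (m + 1) => Nc.map (aeval (v i))).prod = 0 := by
          rcases hcase with hc | hc
          · refine Matrix.ext fun i j => ?_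
            rw [Matrix.zero_apply]
            apply prod_lower_tri
            · intro A hA i' j' hij
              obtain ⟨i0, rfl⟩ := List.mem_ofFn.mp hA
              show aeval (v i0) (Nc i' j') = 0
              rw [hc i' j' hij, map_zero]
            · rw [List.length_ofFn]
              omega
          · refine Matrix.ext fun i j => ?_
            rw [Matrix.zero_apply]
            apply prod_upper_tri
            · intro A hA i' j' hij
              obtain ⟨i0, rfl⟩ := List.mem_ofFn.mp hA
              show aeval (v i0) (Nc i' j') = 0
              rw [hc i' j' hij, map_zero]
            · rw [List.length_ofFn]
              omega
        rw [hzero, Matrix.mul_zero, Matrix.zero_mul]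

theorem stmt3 (K L : Type*) [Field K] [Field L] [Algebra K L] [Infinite L] (m n : ℕ)
    (M : Matrix (Fin m) (Fin m) (MvPolynomial (Fin n) K)) :
    (∃ r : ℕ, 1 ≤ r ∧ ∀ v : Fin r → Fin n → L,
        (List.ofFn fun i => M.map (MvPolynomial.aeval (v i))).prod = 0) ↔
      ∃ T : GL (Fin m) K,
        (∀ i j : Fin m, i ≤ j →
          (((T⁻¹ : GL (Fin m) K) : Matrix (Fin m) (Fin m) K).map
              (algebraMap K (MvPolynomial (Fin n) K)) * M *
            ((T : Matrix (Fin m) (Fin m) K).map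
              (algebraMap K (MvPolynomial (Fin n) K)))) i j = 0) ∨
        (∀ i j : Fin m, j ≤ i →
          (((T⁻¹ : GL (Fin m) K) : Matrix (Fin m) (Fin m) K).map
              (algebraMap K (MvPolynomial (Fin n) K)) * M *
            ((T : Matrix (Fin m) (Fin m) K).map
              (algebraMap K (MvPolynomial (Fin n) K)))) i j = 0) := by
  classical
  constructor
  · rintro ⟨r, hr, hv⟩
    have mono := NN_mono (K := K) M
    have hbot := NN_zero (K := K) M
    have htop := NN_top (K := K) M hv
    obtain ⟨b, hb⟩ := adapted_basis (NN M) mono hbot htop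
    set φ := algebraMap K (MvPolynomial (Fin n) K) with hφ
    set e := Pi.basisFun K (Fin m) with he
    set T := e.toMatrix ⇑b with hT
    have hInv : Invertible T := e.invertibleToMatrix b
    refine ⟨unitOfInvertible T, Or.inr ?_⟩
    have hTentry : ∀ i j : Fin m, T i j = b j i := by
      intro i j
      rw [hT, Module.Basis.toMatrix_apply, he, Pi.basisFun_repr]
    -- the column vectors of M * T.map φ
    have hmem : ∀ j0 : Fin m,
        M.mulVec (fun t => φ (b j0 t)) ∈ Submodule.span (MvPolynomial (Fin n) K)
          (Set.range fun i : Fin m =>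
            if (i : ℕ) < (j0 : ℕ) then (fun t => φ (b i t)) else 0) := by
      intro j0
      obtain ⟨k, hbk, hNk⟩ := hb j0
      have hcoef : ∀ d : Fin n →₀ ℕ,
          (fun s => MvPolynomial.coeff d (M.mulVec (fun t => φ (b j0 t)) s)) ∈
            Submodule.span K (⇑b '' {i : Fin m | (i : ℕ) < (j0 : ℕ)}) :=
        fun d => hNk (NN_coeff M hbk d)
      -- a linear map sending u to φ ∘ u
      set ℓ := (Algebra.linearMap K (MvPolynomial (Fin n) K)).compLeft (Fin m) with hℓ
      have hℓapp : ∀ u : Fin m → K, ℓ u = fun t => φ (u t) := by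
        intro u
        funext t
        rfl
      have φspan : ∀ u ∈ Submodule.span K (⇑b '' {i : Fin m | (i : ℕ) < (j0 : ℕ)}),
          (fun t => φ (u t)) ∈ Submodule.span (MvPolynomial (Fin n) K)
            (Set.range fun i : Fin m =>
              if (i : ℕ) < (j0 : ℕ) then (fun t => φ (b i t)) else 0) := by
        intro u hu
        have hle : Submodule.span K (⇑b '' {i : Fin m | (i : ℕ) < (j0 : ℕ)}) ≤
            Submodule.comap ℓ ((Submodule.span (MvPolynomial (Fin n) K)
              (Set.range fun i : Fin m =>
                if (i : ℕ) < (j0 : ℕ) then (fun t => φ (b i t)) else 0)).restrictScalars K) := by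
          rw [Submodule.span_le]
          rintro x ⟨i1, hi1, rfl⟩
          have h7 : ℓ (b i1) ∈ Submodule.span (MvPolynomial (Fin n) K)
              (Set.range fun i : Fin m =>
                if (i : ℕ) < (j0 : ℕ) then (fun t => φ (b i t)) else 0) := by
            rw [hℓapp]
            apply Submodule.subset_span
            exact ⟨i1, by simp only [Set.mem_setOf_eq] at hi1; simp [hi1]⟩
          exact h7
        have h6 := Submodule.mem_comap.mp (hle hu)
        rw [hℓapp u] at h6
        exact h6
      -- decompose into monomials
      set w := M.mulVec (fun t => φ (b j0 t)) with hw
      set D := Finset.biUnion Finset.univ (fun s : Fin m => (w s).support) with hD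
      have hrep : w = ∑ d ∈ D, (MvPolynomial.monomial d (1 : K)) •
          (fun t => φ (MvPolynomial.coeff d (w t))) := by
        funext t
        rw [Finset.sum_apply]
        have hsub : (w t).support ⊆ D := by
          intro d hd
          rw [hD]
          exact Finset.mem_biUnion.mpr ⟨t, Finset.mem_univ _, hd⟩
        have : ∀ d ∈ D, ((MvPolynomial.monomial d (1 : K)) •
            (fun t' => φ (MvPolynomial.coeff d (w t')))) t =
            MvPolynomial.monomial d (MvPolynomial.coeff d (w t)) := by
          intro d _
          show (MvPolynomial.monomial d (1 : K)) * φ (MvPolynomial.coeff d (w t)) = _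
          rw [hφ, MvPolynomial.algebraMap_eq, mul_comm, MvPolynomial.C_mul_monomial, mul_one]
        rw [Finset.sum_congr rfl this]
        rw [← Finset.sum_subset hsub (fun d _ hd => by
          rw [MvPolynomial.notMem_support_iff.mp hd, map_zero])]
        exact (MvPolynomial.support_sum_monomial_coeff (w t)).symm
      rw [hrep]
      apply Submodule.sum_mem
      intro d _
      exact Submodule.smul_mem _ _ (φspan _ (hcoef d))
    have hrep2 : ∀ j0 : Fin m, ∃ cfun : Fin m → MvPolynomial (Fin n) K,
        (∑ i : Fin m, cfun i • (if (i : ℕ) < (j0 : ℕ) then (fun t => φ (b i t)) else 0)) =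
          M.mulVec (fun t => φ (b j0 t)) :=
      fun j0 => (Submodule.mem_span_range_iff_exists_fun _).mp (hmem j0)
    choose cc hcc using hrep2
    set Nc : Matrix (Fin m) (Fin m) (MvPolynomial (Fin n) K) :=
      Matrix.of fun i j0 => if (i : ℕ) < (j0 : ℕ) then cc j0 i else 0 with hNcdef
    have hMC : M * T.map φ = T.map φ * Nc := by
      refine Matrix.ext fun i0 j0 => ?_
      have e1 : (M * T.map φ) i0 j0 = M.mulVec (fun t => φ (b j0 t)) i0 := by
        rw [Matrix.mul_apply]
        simp only [Matrix.map_apply, hTentry, Matrix.mulVec, dotProduct]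
      have e2 : M.mulVec (fun t => φ (b j0 t)) i0 =
          ∑ k : Fin m, (if (k : ℕ) < (j0 : ℕ) then cc j0 k * φ (b k i0) else 0) := by
        conv_lhs => rw [← hcc j0]
        rw [Finset.sum_apply]
        apply Finset.sum_congr rfl
        intro k _
        by_cases hk : (k : ℕ) < (j0 : ℕ)
        · rw [if_pos hk, if_pos hk]
          rfl
        · rw [if_neg hk, if_neg hk]
          show cc j0 k • (0 : Fin m → MvPolynomial (Fin n) K) i0 = 0
          simp
      have e3 : (T.map φ * Nc) i0 j0 =
          ∑ k : Fin m, (if (k : ℕ) < (j0 : ℕ) then φ (b k i0) * cc j0 k else 0) := by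
        rw [Matrix.mul_apply]
        apply Finset.sum_congr rfl
        intro k _
        simp only [Matrix.map_apply, hTentry, hNcdef, Matrix.of_apply, mul_ite, mul_zero]
      rw [e1, e2, e3]
      apply Finset.sum_congr rfl
      intro k _
      by_cases hk : (k : ℕ) < (j0 : ℕ)
      · rw [if_pos hk, if_pos hk, mul_comm]
      · rw [if_neg hk, if_neg hk]
    intro i j hij
    have hval : ((unitOfInvertible T : GL (Fin m) K) : Matrix (Fin m) (Fin m) K) = T := rfl
    have hinvval : (((unitOfInvertible T)⁻¹ : GL (Fin m) K) : Matrix (Fin m) (Fin m) K) =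
        ⅟T := rfl
    have h4 : (((unitOfInvertible T)⁻¹ : GL (Fin m) K) : Matrix (Fin m) (Fin m) K).map φ * M *
        ((unitOfInvertible T : GL (Fin m) K) : Matrix (Fin m) (Fin m) K).map φ = Nc := by
      rw [hval, hinvval, Matrix.mul_assoc, hMC, ← Matrix.mul_assoc]
      have h5 : ((⅟T).map φ : Matrix (Fin m) (Fin m) (MvPolynomial (Fin n) K)) * T.map φ = 1 := by
        have : ((⅟T * T).map φ : Matrix (Fin m) (Fin m) (MvPolynomial (Fin n) K)) =
            (⅟T).map φ * T.map φ := Matrix.map_mul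
        rw [← this, invOf_mul_self, Matrix.map_one φ (map_zero φ) (map_one φ)]
      rw [h5, Matrix.one_mul]
    rw [h4, hNcdef]
    show (if (i : ℕ) < (j : ℕ) then cc j i else 0) = 0
    rw [if_neg (by
      intro hc
      have := Fin.le_def.mp hij
      omega)]
  · rintro ⟨T, hcase⟩
    refine ⟨m + 1, by omega, ?_⟩
    exact tri_to_nilpotent M T _ rfl hcase
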